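/- Let p = 2k+1 be an odd prime. In the integral group ring R = ℤ[G] of the Klein four-group G, with u = (k+1)·1 + k·a (where a is the image of the first generator of G, so a² = 1), the quotient ring R / Ideal.span {u} is finite of cardinality p². -/

import Mathlib

private abbrev GG := Multiplicative (ZMod 2 × ZMod 2)
private abbrev RR := MonoidAlgebra ℤ GG

theorem quotient_span_u_finite_card_p_sq
    (p k : ℕ) (hp : p.Prime) (hpk : p = 2 * k + 1) :
    letI G := Multiplicative (ZMod 2 × ZMod 2)
    letI R := MonoidAlgebra ℤ G
    letI a : R := MonoidAlgebra.of ℤ G (Multiplicative.ofAdd ((1 : ZMod 2), (0 : ZMod 2)))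
    Finite (R ⧸ Ideal.span {((k : R) + 1) + (k : R) * a}) ∧
      Nat.card (R ⧸ Ideal.span {((k : R) + 1) + (k : R) * a}) = p ^ 2 := by
  set a : RR := MonoidAlgebra.of ℤ GG (Multiplicative.ofAdd ((1 : ZMod 2), (0 : ZMod 2))) with hadef
  haveI : Fact p.Prime := ⟨hp⟩
  set b : RR := MonoidAlgebra.of ℤ GG (Multiplicative.ofAdd ((0 : ZMod 2), (1 : ZMod 2))) with hbdef
  set u : RR := ((k : RR) + 1) + (k : RR) * a with hu
  set I := Ideal.span {u} with hI
  have ha2 : a * a = 1 := by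
    show MonoidAlgebra.of ℤ GG _ * MonoidAlgebra.of ℤ GG _ = 1
    rw [← map_mul, ← map_one (MonoidAlgebra.of ℤ GG)]
    exact congrArg _ (by decide)
  have hpI : ((p : ℤ) : RR) ∈ I := by
    rw [hI, Ideal.mem_span_singleton']
    refine ⟨(k : RR) + 1 - (k : RR) * a, ?_⟩
    rw [hu]
    have h : ((p : ℤ) : RR) = 2 * (k : RR) + 1 := by push_cast [hpk]; ring
    rw [h]
    linear_combination (-(k : RR) ^ 2) * ha2
  have haI : (1 : RR) - a ∈ I := by
    rw [hI, Ideal.mem_span_singleton']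
    refine ⟨(1 : RR) - a, ?_⟩
    rw [hu]
    linear_combination (-(k : RR)) * ha2
  have p2 : p ≠ 2 := by rintro rfl; omega
  -- the character ψ
  have key : ∀ x y : ZMod 2, ((-1 : ZMod p)) ^ (x + y).val = (-1) ^ x.val * (-1) ^ y.val := by
    intro x y
    rw [ZMod.val_add, ← neg_one_pow_eq_pow_mod_two, pow_add]
  let ψ : GG →* (ZMod p) × (ZMod p) :=
    { toFun := fun g => (1, (-1) ^ ((Multiplicative.toAdd g).2.val)),
      map_one' := by simp
      map_mul' := by
        intro g h
        ext
        · simp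
        · simpa using key (Multiplicative.toAdd g).2 (Multiplicative.toAdd h).2 }
  let φ : RR →+* (ZMod p) × (ZMod p) :=
    ((MonoidAlgebra.lift ℤ ((ZMod p) × (ZMod p)) GG) ψ).toRingHom
  have hφa : φ a = (1, 1) := by
    show ((MonoidAlgebra.lift ℤ ((ZMod p) × (ZMod p)) GG) ψ) (MonoidAlgebra.of ℤ GG _) = _
    rw [MonoidAlgebra.lift_of]
    show (1, ((-1 : ZMod p)) ^ (ZMod.val (0 : ZMod 2))) = _
    simp
  have hφb : φ b = (1, -1) := by
    show ((MonoidAlgebra.lift ℤ ((ZMod p) × (ZMod p)) GG) ψ) (MonoidAlgebra.of ℤ GG _) = _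
    rw [MonoidAlgebra.lift_of]
    show (1, ((-1 : ZMod p)) ^ (ZMod.val (1 : ZMod 2))) = _
    norm_num [ZMod.val_one]
  have hφu : φ u = 0 := by
    rw [hu, map_add, map_add, map_mul, map_one, map_natCast, hφa]
    have h0 : ((1, 1) : (ZMod p) × (ZMod p)) = 1 := rfl
    rw [h0, mul_one]
    have h1 : ((k : (ZMod p) × (ZMod p)) + 1) + (k : (ZMod p) × (ZMod p))
        = ((2 * k + 1 : ℕ) : (ZMod p) × (ZMod p)) := by push_cast; ring
    rw [h1, ← hpk]
    ext <;> simp [Prod.fst_natCast, Prod.snd_natCast]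
  have hle : ∀ x ∈ I, φ x = 0 := by
    intro x hx
    rw [hI] at hx
    obtain ⟨c, rfl⟩ := Ideal.mem_span_singleton'.mp hx
    rw [map_mul, hφu, mul_zero]
  let φbar : RR ⧸ I →+* (ZMod p) × (ZMod p) := Ideal.Quotient.lift I φ hle
  -- θ
  let θ : (ZMod p) × (ZMod p) → RR ⧸ I :=
    fun mn => Ideal.Quotient.mk I (((mn.1.val : ℤ) : RR) + ((mn.2.val : ℤ) : RR) * b)
  -- surjectivity
  have hsurj : Function.Surjective θ := by
    intro z
    obtain ⟨x, rfl⟩ := Ideal.Quotient.mk_surjective z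
    have hx : ∃ m n : ℤ, x - (((m : ℤ) : RR) + ((n : ℤ) : RR) * b) ∈ I := by
      induction x using MonoidAlgebra.induction_on with
      | of g =>
        have hg : ∀ w : ZMod 2 × ZMod 2,
            w = (0, 0) ∨ w = (1, 0) ∨ w = (0, 1) ∨ w = (1, 1) := by decide
        rcases hg (Multiplicative.toAdd g) with h | h | h | h
        · refine ⟨1, 0, ?_⟩
          have : MonoidAlgebra.of ℤ GG g = 1 := by
            rw [← ofAdd_toAdd g, h]; exact map_one _
          rw [this]; simp
        · refine ⟨1, 0, ?_⟩
          have : MonoidAlgebra.of ℤ GG g = a := by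
            rw [← ofAdd_toAdd g, h]
          rw [this]
          refine (by push_cast; ring : a - (((1:ℤ):RR) + ((0:ℤ):RR) * b) = -(1 - a)) ▸ I.neg_mem haI
        · refine ⟨0, 1, ?_⟩
          have : MonoidAlgebra.of ℤ GG g = b := by
            rw [← ofAdd_toAdd g, h]
          rw [this]; simp
        · refine ⟨0, 1, ?_⟩
          have : MonoidAlgebra.of ℤ GG g = a * b := by
            rw [← ofAdd_toAdd g, h, ← map_mul]
            exact congrArg _ (by decide)
          rw [this]
          have hmem : -(b * (1 - a)) ∈ I := I.neg_mem (I.mul_mem_left b haI)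
          refine (by push_cast; ring : a * b - (((0:ℤ):RR) + ((1:ℤ):RR) * b) = -(b * (1 - a))) ▸ hmem
      | add f g hf hg =>
        obtain ⟨m, n, hm⟩ := hf
        obtain ⟨m', n', hm'⟩ := hg
        refine ⟨m + m', n + n', ?_⟩
        have := I.add_mem hm hm'
        refine (by push_cast; ring :
          (f + g) - (((m + m' : ℤ) : RR) + ((n + n' : ℤ) : RR) * b)
            = (f - (((m:ℤ):RR) + ((n:ℤ):RR) * b)) + (g - (((m':ℤ):RR) + ((n':ℤ):RR) * b))) ▸ this
      | smul r f hf =>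
        obtain ⟨m, n, hm⟩ := hf
        refine ⟨r * m, r * n, ?_⟩
        have := I.mul_mem_left ((r : ℤ) : RR) hm
        refine (by push_cast [zsmul_eq_mul]; ring :
          r • f - (((r * m : ℤ) : RR) + ((r * n : ℤ) : RR) * b)
            = ((r : ℤ) : RR) * (f - (((m:ℤ):RR) + ((n:ℤ):RR) * b))) ▸ this
    obtain ⟨m, n, hmn⟩ := hx
    refine ⟨((m : ZMod p), (n : ZMod p)), ?_⟩
    have hcast : ∀ m : ℤ, (((((m : ZMod p)).val : ℤ) : ZMod p)) = (m : ZMod p) := by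
      intro m; rw [Int.cast_natCast, ZMod.natCast_val, ZMod.cast_id]
    have h1 : (p : ℤ) ∣ ((((m : ZMod p)).val : ℤ) - m) := by
      rw [← ZMod.intCast_zmod_eq_zero_iff_dvd]
      push_cast [hcast]
      ring
    have h2 : (p : ℤ) ∣ ((((n : ZMod p)).val : ℤ) - n) := by
      rw [← ZMod.intCast_zmod_eq_zero_iff_dvd]
      push_cast [hcast]
      ring
    obtain ⟨c, hc⟩ := h1
    obtain ⟨d, hd⟩ := h2
    show Ideal.Quotient.mk I _ = Ideal.Quotient.mk I x
    rw [Ideal.Quotient.eq]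
    have hmem : ((p:ℤ):RR) * ((c:RR) + (d:RR) * b) + -(x - (((m:ℤ):RR) + ((n:ℤ):RR) * b)) ∈ I :=
      I.add_mem (I.mul_mem_right _ hpI) (I.neg_mem hmn)
    have hc' : (((((m : ZMod p)).val : ℤ)) : RR) = (m : RR) + (p : RR) * (c : RR) := by
      have h : ((((m : ZMod p)).val : ℤ)) = m + (p : ℤ) * c := by omega
      rw [h]; push_cast; ring
    have hd' : (((((n : ZMod p)).val : ℤ)) : RR) = (n : RR) + (p : RR) * (d : RR) := by
      have h : ((((n : ZMod p)).val : ℤ)) = n + (p : ℤ) * d := by omega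
      rw [h]; push_cast; ring
    have heq : (((((m : ZMod p)).val : ℤ) : RR) + ((((n : ZMod p)).val : ℤ) : RR) * b) - x
        = ((p:ℤ):RR) * ((c:RR) + (d:RR) * b) + -(x - (((m:ℤ):RR) + ((n:ℤ):RR) * b)) := by
      rw [hc', hd']
      push_cast
      ring
    show (((((m : ZMod p)).val : ℤ) : RR) + ((((n : ZMod p)).val : ℤ) : RR) * b) - x ∈ I
    rw [heq]
    exact hmem
  -- computation of φbar ∘ θ
  have hcomp : ∀ mn : (ZMod p) × (ZMod p),
      φbar (θ mn) = (mn.1 + mn.2, mn.1 - mn.2) := by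
    rintro ⟨m, n⟩
    show φ (((m.val : ℤ) : RR) + ((n.val : ℤ) : RR) * b) = _
    rw [map_add, map_mul, map_intCast, map_intCast, hφb]
    have hm : ((m.val : ℤ) : (ZMod p) × (ZMod p)) = ((m, m) : (ZMod p) × (ZMod p)) := by
      ext <;> simp [Prod.fst_intCast, Prod.snd_intCast, ZMod.natCast_val, ZMod.cast_id]
    have hn : ((n.val : ℤ) : (ZMod p) × (ZMod p)) = ((n, n) : (ZMod p) × (ZMod p)) := by
      ext <;> simp [Prod.fst_intCast, Prod.snd_intCast, ZMod.natCast_val, ZMod.cast_id]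
    rw [hm, hn]
    ext <;> simp <;> ring
  have htwo : (2 : ZMod p) ≠ 0 := by
    intro h
    have : ((2 : ℕ) : ZMod p) = 0 := by exact_mod_cast h
    rw [ZMod.natCast_eq_zero_iff] at this
    exact p2 ((Nat.prime_dvd_prime_iff_eq hp Nat.prime_two).mp this)
  have hinj : Function.Injective θ := by
    rintro ⟨m, n⟩ ⟨m', n'⟩ h
    have h' := congrArg φbar h
    rw [hcomp, hcomp] at h'
    have e1 : m + n = m' + n' := congrArg Prod.fst h'
    have e2 : m - n = m' - n' := congrArg Prod.snd h'
    have em : (2 : ZMod p) * m = 2 * m' := by linear_combination e1 + e2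
    have hm : m = m' := mul_left_cancel₀ htwo em
    have hn : n = n' := by linear_combination e1 - hm
    rw [hm, hn]
  have hbij : Function.Bijective θ := ⟨hinj, hsurj⟩
  haveI : NeZero p := ⟨hp.pos.ne'⟩
  constructor
  · exact Finite.of_surjective θ hsurj
  · rw [← Nat.card_eq_of_bijective θ hbij, Nat.card_prod, Nat.card_zmod, sq]
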